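/- Let F be a nonsingular continuous flow on a compact metric space X. Then F is expansive in the Bowen–Walters sense (property E1) if and only if it satisfies: for all ε > 0 there exists δ > 0 such that whenever x, y ∈ X δ-fellow travel up to reparametrization, then y lies on the orbit of x and the flow segment from y to x lies in the ε-ball around x (property E2). -/
import Mathlib


open Metric

/-- `F` is a continuous flow. -/
def IsFlow {X : Type*} [TopologicalSpace X] (F : ℝ → X → X) : Prop :=
  Continuous (fun p : ℝ × X => F p.1 p.2) ∧ (∀ x, F 0 x = x) ∧
    ∀ s t x, F s (F t x) = F (s + t) x

/-- `x` and `y` δ-fellow travel up to reparametrization: there is an increasing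
homeomorphism `h : ℝ → ℝ` fixing `0` with `dist (F t x) (F (h t) y) < δ` for all `t`. -/
def FellowTravel {X : Type*} [MetricSpace X] (F : ℝ → X → X) (δ : ℝ) (x y : X) : Prop :=
  ∃ h : ℝ → ℝ, Continuous h ∧ StrictMono h ∧ Function.Surjective h ∧ h 0 = 0 ∧
    ∀ t : ℝ, dist (F t x) (F (h t) y) < δ

/-- Bowen–Walters expansiveness (E1): fellow travellers lie on the same orbit at a
small time. -/
def PropE1 {X : Type*} [MetricSpace X] (F : ℝ → X → X) : Prop :=
  ∀ ε > 0, ∃ δ > 0, ∀ x y : X, FellowTravel F δ x y → ∃ t : ℝ, |t| < ε ∧ y = F t x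

/-- Property (E2): fellow travellers lie on the same orbit, and the flow segment from
`y` to `x` lies in the ε-ball around `x`. -/
def PropE2 {X : Type*} [MetricSpace X] (F : ℝ → X → X) : Prop :=
  ∀ ε > 0, ∃ δ > 0, ∀ x y : X, FellowTravel F δ x y →
    ∃ s : ℝ, x = F s y ∧ ∀ u ∈ Set.uIcc 0 s, F u y ∈ ball x ε

section Aux

variable {X : Type*} [MetricSpace X] [CompactSpace X] {F : ℝ → X → X}

private lemma flow_cont (hF : IsFlow F) (y : X) : Continuous fun t => F t y :=
  hF.1.comp (continuous_id.prodMk continuous_const)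

/-- Uniform continuity at time `0`. -/
private lemma unif (hF : IsFlow F) {ε : ℝ} (hε : 0 < ε) :
    ∃ η > 0, ∀ (x : X) (v : ℝ), |v| ≤ η → dist (F v x) x < ε := by
  set g : ℝ × X → ℝ := fun p => dist (F p.1 p.2) p.2 with hg
  have hgc : Continuous g := hF.1.dist continuous_snd
  set S : Set (ℝ × X) := {p | p.1 ∈ Set.Icc (-1 : ℝ) 1 ∧ ε ≤ g p} with hS
  have hScl : IsClosed S :=
    (isClosed_Icc.preimage continuous_fst).inter (isClosed_Ici.preimage hgc)
  have hSc : IsCompact S := by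
    refine IsCompact.of_isClosed_subset
      ((isCompact_Icc (a := (-1 : ℝ)) (b := 1)).prod isCompact_univ) hScl ?_
    intro p hp
    exact Set.mk_mem_prod hp.1 (Set.mem_univ _)
  rcases S.eq_empty_or_nonempty with hemp | hne
  · refine ⟨1, one_pos, fun x v hv => ?_⟩
    by_contra h
    have hmem : (v, x) ∈ S := ⟨Set.mem_Icc.mpr (abs_le.mp hv), le_of_not_gt h⟩
    rw [hemp] at hmem
    exact hmem
  · obtain ⟨p0, hp0S, hp0min⟩ := hSc.exists_isMinOn hne
      ((continuous_fst.abs).continuousOn)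
    have hp0 : p0.1 ≠ 0 := by
      intro h0
      have h1 : ε ≤ g p0 := hp0S.2
      have : g p0 = 0 := by
        simp only [hg, h0, hF.2.1, dist_self]
      linarith
    have habs : 0 < |p0.1| := abs_pos.mpr hp0
    refine ⟨min (|p0.1| / 2) 1, by positivity, fun x v hv => ?_⟩
    by_contra h
    have hv1 : |v| ≤ 1 := hv.trans (min_le_right _ _)
    have hmem : (v, x) ∈ S := ⟨Set.mem_Icc.mpr (abs_le.mp hv1), le_of_not_gt h⟩
    have := hp0min hmem
    have : |p0.1| ≤ |p0.1| / 2 := this.trans (hv.trans (min_le_left _ _))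
    linarith

/-- For a nonsingular flow, no point can be fixed by both `F (c/2)` and `F (c/√2)`. -/
private lemma period_pos (hF : IsFlow F) (hns : ∀ x : X, ∃ t : ℝ, F t x ≠ x)
    {c : ℝ} (hc : 0 < c) (y : X) :
    0 < dist (F (c / 2) y) y + dist (F (c / Real.sqrt 2) y) y := by
  have hs2 : (0 : ℝ) < Real.sqrt 2 := Real.sqrt_pos.mpr (by norm_num)
  rcases lt_or_eq_of_le
      (by positivity : (0 : ℝ) ≤ dist (F (c / 2) y) y + dist (F (c / Real.sqrt 2) y) y)
    with h | h
  · exact h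
  exfalso
  have h1 : F (c / 2) y = y := by
    have := dist_nonneg (x := F (c / 2) y) (y := y)
    have := dist_nonneg (x := F (c / Real.sqrt 2) y) (y := y)
    have : dist (F (c / 2) y) y = 0 := by linarith
    exact dist_eq_zero.mp this
  have h2 : F (c / Real.sqrt 2) y = y := by
    have := dist_nonneg (x := F (c / 2) y) (y := y)
    have := dist_nonneg (x := F (c / Real.sqrt 2) y) (y := y)
    have : dist (F (c / Real.sqrt 2) y) y = 0 := by linarith
    exact dist_eq_zero.mp this
  -- the set of periods is an additive subgroup of ℝ
  set G : AddSubgroup ℝ :=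
    { carrier := {t : ℝ | F t y = y}
      zero_mem' := hF.2.1 y
      add_mem' := by
        intro a b ha hb
        simp only [Set.mem_setOf_eq] at *
        rw [← hF.2.2, hb, ha]
      neg_mem' := by
        intro a ha
        simp only [Set.mem_setOf_eq] at *
        calc F (-a) y = F (-a) (F a y) := by rw [ha]
          _ = F (-a + a) y := hF.2.2 _ _ _
          _ = y := by rw [neg_add_cancel]; exact hF.2.1 y } with hG
  rcases G.dense_or_cyclic with hdense | ⟨a, ha⟩
  · -- dense and closed, so all of ℝ, contradicting nonsingularity
    have hcl : IsClosed (G : Set ℝ) := isClosed_singleton.preimage (flow_cont hF y)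
    have huniv : (G : Set ℝ) = Set.univ := by
      rw [← hcl.closure_eq, hdense.closure_eq]
    obtain ⟨t, ht⟩ := hns y
    exact ht (Set.eq_univ_iff_forall.mp huniv t)
  · -- cyclic: both c/2 and c/√2 are multiples of a, contradicting irrationality of √2
    have hm1 : c / 2 ∈ G := h1
    have hm2 : c / Real.sqrt 2 ∈ G := h2
    rw [ha, AddSubgroup.mem_closure_singleton] at hm1 hm2
    obtain ⟨n, hn⟩ := hm1
    obtain ⟨m, hm⟩ := hm2
    rw [zsmul_eq_mul] at hn hm
    have hane : a ≠ 0 := by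
      intro h0
      rw [h0, mul_zero] at hn
      have : c = 0 := by linarith [hn]
      exact absurd this (ne_of_gt hc)
    have hmne : (m : ℝ) ≠ 0 := by
      intro h0
      rw [h0, zero_mul] at hm
      have : 0 < c / Real.sqrt 2 := by positivity
      rw [← hm] at this
      exact lt_irrefl _ this
    -- from  n*a = c/2  and  m*a = c/√2 :  √2 = 2n/m
    have key : Real.sqrt 2 = (2 * (n : ℝ)) / (m : ℝ) := by
      have e1 : c = 2 * ((n : ℝ) * a) := by linarith [hn]
      have e2 : c = Real.sqrt 2 * ((m : ℝ) * a) := by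
        field_simp at hm
        linarith [hm]
      have e3 : (Real.sqrt 2 * (m : ℝ)) * a = (2 * (n : ℝ)) * a := by
        nlinarith [e1, e2]
      have e4 : Real.sqrt 2 * (m : ℝ) = 2 * (n : ℝ) := mul_right_cancel₀ hane e3
      rw [eq_div_iff hmne]
      linarith
    have : Real.sqrt 2 = ((2 * n / m : ℚ) : ℝ) := by push_cast; exact key
    have hirr := irrational_sqrt_two
    rw [this] at hirr
    exact (Rat.not_irrational _) hirr

/-- Uniform lower bound on the combined displacement at times `c/2` and `c/√2`. -/
private lemma exists_alpha (hF : IsFlow F) (hns : ∀ x : X, ∃ t : ℝ, F t x ≠ x)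
    {c : ℝ} (hc : 0 < c) :
    ∃ α > 0, ∀ y : X,
      α ≤ dist (F (c / 2) y) y + dist (F (c / Real.sqrt 2) y) y := by
  cases isEmpty_or_nonempty X with
  | inl h => exact ⟨1, one_pos, fun y => (h.false y).elim⟩
  | inr h =>
    set m : X → ℝ := fun y => dist (F (c / 2) y) y + dist (F (c / Real.sqrt 2) y) y with hm
    have hmc : Continuous m := by
      apply Continuous.add
      · exact ((hF.1.comp (continuous_const.prodMk continuous_id)).dist continuous_id)
      · exact ((hF.1.comp (continuous_const.prodMk continuous_id)).dist continuous_id)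
    obtain ⟨y0, -, hy0⟩ := isCompact_univ.exists_isMinOn Set.univ_nonempty
      hmc.continuousOn
    exact ⟨m y0, period_pos hF hns hc y0, fun y => hy0 (Set.mem_univ y)⟩

end Aux

/-- For a nonsingular continuous flow on a compact metric space, the Bowen–Walters
expansiveness property (E1) is equivalent to property (E2). -/
theorem expansive_iff {X : Type*} [MetricSpace X] [CompactSpace X]
    (F : ℝ → X → X) (hF : IsFlow F) (hns : ∀ x : X, ∃ t : ℝ, F t x ≠ x) :
    PropE1 F ↔ PropE2 F := by
  have hs2 : (0 : ℝ) < Real.sqrt 2 := Real.sqrt_pos.mpr (by norm_num)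
  have hs2' : (1 : ℝ) ≤ Real.sqrt 2 := by
    rw [show (1 : ℝ) = Real.sqrt 1 from Real.sqrt_one.symm]
    exact Real.sqrt_le_sqrt (by norm_num)
  constructor
  · -- E1 → E2
    intro hE1 ε hε
    obtain ⟨η, hη, hunif⟩ := unif hF hε
    obtain ⟨δ, hδ, hδprop⟩ := hE1 η hη
    refine ⟨δ, hδ, fun x y hft => ?_⟩
    obtain ⟨t, ht, hty⟩ := hδprop x y hft
    refine ⟨-t, ?_, ?_⟩
    · rw [hty, hF.2.2, neg_add_cancel, hF.2.1]
    · intro u hu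
      have hcalc : F u y = F (u + t) x := by rw [hty, hF.2.2]
      have habs : |u + t| ≤ |t| := by
        rcases Set.mem_uIcc.mp hu with ⟨h1, h2⟩ | ⟨h1, h2⟩ <;>
          (rw [abs_le]; constructor <;>
            linarith [neg_abs_le t, le_abs_self t, abs_nonneg t])
      rw [mem_ball, hcalc]
      exact hunif x (u + t) (habs.trans ht.le)
  · -- E2 → E1
    intro hE2 ε hε
    obtain ⟨α, hα, halpha⟩ := exists_alpha hF hns hε
    obtain ⟨δ, hδ, hδprop⟩ := hE2 (α / 4) (by positivity)
    refine ⟨δ, hδ, fun x y hft => ?_⟩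
    obtain ⟨s, hs, hseg⟩ := hδprop x y hft
    have hy : y ∈ ball x (α / 4) := by
      have := hseg 0 Set.left_mem_uIcc
      rwa [hF.2.1] at this
    have hsmall : |s| < ε := by
      by_contra hbig
      push_neg at hbig
      rcases le_or_gt ε s with hsp | hsn
      · -- s ≥ ε : both ε/2 and ε/√2 lie in [0, s]
        have hsub : ∀ u : ℝ, 0 ≤ u → u ≤ ε → F u y ∈ ball x (α / 4) := by
          intro u hu1 hu2
          apply hseg
          rw [Set.uIcc_of_le (by linarith : (0:ℝ) ≤ s)]
          exact Set.mem_Icc.mpr ⟨hu1, by linarith⟩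
        have hb1 : dist (F (ε / 2) y) x < α / 4 :=
          mem_ball.mp (hsub (ε / 2) (by positivity) (by linarith))
        have hb2 : dist (F (ε / Real.sqrt 2) y) x < α / 4 :=
          mem_ball.mp (hsub (ε / Real.sqrt 2) (by positivity)
            (div_le_self hε.le hs2'))
        have hby : dist y x < α / 4 := mem_ball.mp hy
        have := halpha y
        have t1 := dist_triangle (F (ε / 2) y) x y
        have t2 := dist_triangle (F (ε / Real.sqrt 2) y) x y
        rw [dist_comm x y] at t1 t2
        linarith
      · -- s ≤ -ε : apply the lower bound at the point x = F s y
        have hsneg : s ≤ -ε := by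
          rcases abs_cases s with ⟨h1, h2⟩ | ⟨h1, h2⟩ <;> linarith
        have hsub : ∀ v : ℝ, 0 ≤ v → v ≤ ε → F v x ∈ ball x (α / 4) := by
          intro v hv1 hv2
          have : F v x = F (s + v) y := by rw [hs, hF.2.2, add_comm]
          rw [this]
          apply hseg
          rw [Set.uIcc_comm, Set.uIcc_of_le (by linarith : s ≤ (0:ℝ))]
          exact Set.mem_Icc.mpr ⟨by linarith, by linarith⟩
        have hb1 : dist (F (ε / 2) x) x < α / 4 :=
          mem_ball.mp (hsub (ε / 2) (by positivity) (by linarith))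
        have hb2 : dist (F (ε / Real.sqrt 2) x) x < α / 4 :=
          mem_ball.mp (hsub (ε / Real.sqrt 2) (by positivity)
            (div_le_self hε.le hs2'))
        have := halpha x
        linarith
    refine ⟨-s, by rwa [abs_neg], ?_⟩
    rw [hs, hF.2.2, neg_add_cancel, hF.2.1]
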